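/- Let T be the interval exchange transformation determined by (λ, π) and σ the associated auxiliary permutation on {0,...,d}. Writing ω_0 = 0, ω_i = λ_1 + ... + λ_i for 1 ≤ i ≤ d (so ω_d = 1), and T_+(a) = lim_{x→a+} T(x), T_-(a) = lim_{x→a-} T(x): if σ(j) = k with ω_j ≠ 0 and ω_k ≠ 1 (i.e. the third case of the definition of σ applies, with j ≥ 1 and π(j) ≠ d), then T_-(ω_j) = T_+(ω_k). -/

import Mathlib

open Finset

/-- For an interval exchange transformation `T` with auxiliary permutation `σ`:
if `σ(j) = k` via the third case of the definition (`j ≥ 1`, `π(j) ≠ d`,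
`k = π⁻¹(π(j)+1) - 1`), then the left limit of `T` at `ω_j` equals the right limit
of `T` at `ω_k`. -/
theorem aux_permutation_limit_identification (d : ℕ) (hd : 1 ≤ d)
    (π πinv : ℕ → ℕ)
    (hπ : ∀ j, 1 ≤ j → j ≤ d → 1 ≤ π j ∧ π j ≤ d)
    (hπinv : ∀ j, 1 ≤ j → j ≤ d → 1 ≤ πinv j ∧ πinv j ≤ d)
    (hleft : ∀ j, 1 ≤ j → j ≤ d → πinv (π j) = j)
    (hright : ∀ j, 1 ≤ j → j ≤ d → π (πinv j) = j)
    (lam : ℕ → ℝ) (hpos : ∀ i, 1 ≤ i → i ≤ d → 0 < lam i)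
    (hsum : ∑ i ∈ Finset.Icc 1 d, lam i = 1)
    -- `ω i = λ₁ + ⋯ + λ_i`, so `ω 0 = 0` and `ω d = 1`
    (ω : ℕ → ℝ) (hω : ∀ i, ω i = ∑ j ∈ Finset.Icc 1 i, lam j)
    (T : ℝ → ℝ)
    (hT : ∀ i, 1 ≤ i → i ≤ d → ∀ x ∈ Set.Ico (ω (i - 1)) (ω i),
      T x = x - ω (i - 1) + ∑ j ∈ (Finset.Icc 1 d).filter (fun j => π j < π i), lam j)
    (j k : ℕ) (hj1 : 1 ≤ j) (hjd : j ≤ d) (hπj : π j ≠ d)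
    (hk : k = πinv (π j + 1) - 1) :
    ∃ L : ℝ,
      Filter.Tendsto T (nhdsWithin (ω j) (Set.Iio (ω j))) (nhds L) ∧
      Filter.Tendsto T (nhdsWithin (ω k) (Set.Ioi (ω k))) (nhds L) := by
  set m := πinv (π j + 1) with hmdef
  obtain ⟨hπj1, hπjd⟩ := hπ j hj1 hjd
  have hπjd' : π j + 1 ≤ d := by omega
  obtain ⟨hm1, hmd⟩ := hπinv (π j + 1) (by omega) hπjd'
  have hπm : π m = π j + 1 := hright (π j + 1) (by omega) hπjd'
  have hkm : m = k + 1 := by omega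
  -- step formula for ω
  have hωstep : ∀ i, 1 ≤ i → ω i = ω (i - 1) + lam i := by
    intro i hi
    obtain ⟨n, rfl⟩ : ∃ n, i = n + 1 := ⟨i - 1, by omega⟩
    have h := Finset.sum_Icc_succ_top (by omega : 1 ≤ n + 1) lam
    simp only [hω, Nat.add_sub_cancel]
    exact h
  have hmj : j ≠ m := by
    intro h; rw [← h] at hπm; omega
  -- the two sums
  set Sj : ℝ := ∑ i ∈ (Finset.Icc 1 d).filter (fun i => π i < π j), lam i with hSj
  set Sm : ℝ := ∑ i ∈ (Finset.Icc 1 d).filter (fun i => π i < π m), lam i with hSm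
  have hfil : (Finset.Icc 1 d).filter (fun i => π i < π m)
      = insert j ((Finset.Icc 1 d).filter (fun i => π i < π j)) := by
    ext x
    simp only [Finset.mem_insert, Finset.mem_filter, Finset.mem_Icc, hπm]
    constructor
    · rintro ⟨⟨h1, h2⟩, hlt⟩
      by_cases hx : π x = π j
      · left
        have e1 := hleft x h1 h2
        have e2 := hleft j hj1 hjd
        rw [hx] at e1; omega
      · right; exact ⟨⟨h1, h2⟩, by omega⟩
    · rintro (rfl | ⟨h, hlt⟩)
      · exact ⟨⟨hj1, hjd⟩, by omega⟩
      · exact ⟨h, by omega⟩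
  have hjnot : j ∉ (Finset.Icc 1 d).filter (fun i => π i < π j) := by
    simp [Finset.mem_filter]
  have hSmSj : Sm = lam j + Sj := by
    rw [hSm, hfil, Finset.sum_insert hjnot]
  have hstepj := hωstep j hj1
  have hstepm := hωstep m (by omega)
  have hposj := hpos j hj1 hjd
  have hposm := hpos m (by omega) hmd
  have hmk : m - 1 = k := by omega
  refine ⟨ω j - ω (j - 1) + Sj, ?_, ?_⟩
  · -- left limit at ω j
    have hmem : Set.Ioo (ω (j - 1)) (ω j) ∈ nhdsWithin (ω j) (Set.Iio (ω j)) :=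
      Ioo_mem_nhdsLT_of_mem ⟨by linarith, le_refl _⟩
    have hbase : Filter.Tendsto (fun x => x - ω (j - 1) + Sj)
        (nhdsWithin (ω j) (Set.Iio (ω j))) (nhds (ω j - ω (j - 1) + Sj)) := by
      exact (((continuous_id.sub continuous_const).add continuous_const).tendsto
        (ω j)).mono_left nhdsWithin_le_nhds
    refine hbase.congr' ?_
    filter_upwards [hmem] with x hx
    exact (hT j hj1 hjd x ⟨le_of_lt hx.1, hx.2⟩).symm
  · -- right limit at ω k
    have hltk : ω k < ω m := by rw [← hmk] at *; linarith
    have hmem : Set.Ico (ω k) (ω m) ∈ nhdsWithin (ω k) (Set.Ioi (ω k)) :=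
      Ico_mem_nhdsGT_of_mem ⟨le_refl _, hltk⟩
    have hL : ω j - ω (j - 1) + Sj = ω k - ω k + Sm := by
      rw [hSmSj]; linarith
    rw [hL]
    have hbase : Filter.Tendsto (fun x => x - ω k + Sm)
        (nhdsWithin (ω k) (Set.Ioi (ω k))) (nhds (ω k - ω k + Sm)) := by
      exact (((continuous_id.sub continuous_const).add continuous_const).tendsto
        (ω k)).mono_left nhdsWithin_le_nhds
    refine hbase.congr' ?_
    filter_upwards [hmem] with x hx
    have := hT m (by omega) hmd x (by rw [hmk]; exact hx)
    rw [hmk] at this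
    exact this.symm
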